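/- Let Λ be a compact invariant set for a continuous flow ψ_t on a manifold, with vector field X nowhere zero on Λ, and let 𝐍 ⊂ TΛ-bundle be a continuous dψ-quotient-invariant bundle with T_θ Σ = 𝐍(θ) ⊕ ⟨X(θ)⟩ and induced action Ψ_t = ℙ ∘ dψ_t (ℙ the projection onto 𝐍 along X). If Ψ_t|_Λ is hyperbolic with splitting 𝐍 = E^s ⊕ E^u, then the graph transform T_t on continuous linear functionals L : E^u → ℝ, defined by dψ_t(v + L(v)X) = Ψ_t(v) + (T_tL)(Ψ_t v)·X, satisfies T_t(L₁ − L₂) = [(L₁ − L₂) ∘ Ψ_t^{-1}|_{E^u}], hence ‖T_t(L₁) − T_t(L₂)‖ ≤ ‖Ψ_{-t}|_{E^u ∘ ψ_t}‖ · ‖L₁ − L₂‖ < ‖L₁ − L₂‖ for large t > 0; consequently T_t has a unique fixed point L* and 𝓔^u := graph(L*) is dψ_t-invariant with ‖dψ_{−t}|_{𝓔^u}‖ ≤ ‖Ψ_{−t}|_{E^u}‖·‖ℙ‖·(1 + ‖L*‖) → 0 exponentially. -/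

import Mathlib

open Filter Topology

/-- A continuous linear cocycle (`ℝ`-action by bundle isomorphisms on the
trivial vector bundle `B × E`) over a continuous flow on `B`. -/
structure LinearCocycle (B E : Type*) [TopologicalSpace B]
    [NormedAddCommGroup E] [NormedSpace ℝ E] where
  flow : ℝ → B → B
  flow_cont : Continuous fun p : ℝ × B => flow p.1 p.2
  flow_zero : ∀ b, flow 0 b = b
  flow_add : ∀ s t b, flow s (flow t b) = flow (s + t) b
  P : ℝ → B → E →L[ℝ] E
  P_cont : Continuous fun p : ℝ × B => P p.1 p.2
  P_zero : ∀ b, P 0 b = ContinuousLinearMap.id ℝ E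
  P_comp : ∀ s t b, (P s (flow t b)).comp (P t b) = P (s + t) b

variable {B E : Type*} [TopologicalSpace B]
  [NormedAddCommGroup E] [NormedSpace ℝ E]

/-- Quasi-hyperbolicity: every nonzero vector has unbounded orbit. -/
def LinearCocycle.IsQuasiHyperbolic (Φ : LinearCocycle B E) : Prop :=
  ∀ b : B, ∀ v : E, v ≠ 0 → ∀ C : ℝ, ∃ t : ℝ, C < ‖Φ.P t b v‖

/-- The subspace of vectors with bounded forward orbit. -/
def LinearCocycle.stable (Φ : LinearCocycle B E) (b : B) : Submodule ℝ E where
  carrier := {v | ∃ C : ℝ, ∀ t > (0:ℝ), ‖Φ.P t b v‖ ≤ C}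
  add_mem' := by
    rintro u v ⟨C₁, h₁⟩ ⟨C₂, h₂⟩
    exact ⟨C₁ + C₂, fun t ht => by
      simpa [map_add] using (norm_add_le (Φ.P t b u) (Φ.P t b v)).trans
        (add_le_add (h₁ t ht) (h₂ t ht))⟩
  zero_mem' := ⟨0, fun t ht => by simp⟩
  smul_mem' := by
    rintro c v ⟨C, h⟩
    exact ⟨‖c‖ * C, fun t ht => by
      rw [map_smul, norm_smul]
      exact mul_le_mul_of_nonneg_left (h t ht) (norm_nonneg c)⟩

/-- The subspace of vectors with bounded backward orbit. -/
def LinearCocycle.unstable (Φ : LinearCocycle B E) (b : B) : Submodule ℝ E where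
  carrier := {v | ∃ C : ℝ, ∀ t > (0:ℝ), ‖Φ.P (-t) b v‖ ≤ C}
  add_mem' := by
    rintro u v ⟨C₁, h₁⟩ ⟨C₂, h₂⟩
    exact ⟨C₁ + C₂, fun t ht => by
      simpa [map_add] using (norm_add_le (Φ.P (-t) b u) (Φ.P (-t) b v)).trans
        (add_le_add (h₁ t ht) (h₂ t ht))⟩
  zero_mem' := ⟨0, fun t ht => by simp⟩
  smul_mem' := by
    rintro c v ⟨C, h⟩
    exact ⟨‖c‖ * C, fun t ht => by
      rw [map_smul, norm_smul]
      exact mul_le_mul_of_nonneg_left (h t ht) (norm_nonneg c)⟩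

/-- Uniform hyperbolicity of a linear cocycle over an invariant subset `Λ`. -/
def LinearCocycle.IsHyperbolicOn (Φ : LinearCocycle B E) (Λ : Set B) : Prop :=
  ∃ Es Eu : B → Submodule ℝ E,
    (∀ t : ℝ, ∀ b ∈ Λ, (Es b).map (Φ.P t b : E →ₗ[ℝ] E) = Es (Φ.flow t b)) ∧
    (∀ t : ℝ, ∀ b ∈ Λ, (Eu b).map (Φ.P t b : E →ₗ[ℝ] E) = Eu (Φ.flow t b)) ∧
    (∀ b ∈ Λ, IsCompl (Es b) (Eu b)) ∧
    ∃ T > (0:ℝ), ∀ b ∈ Λ,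
      (∀ v ∈ Es b, v ≠ 0 → ‖Φ.P T b v‖ < (1/2) * ‖v‖) ∧
      (∀ v ∈ Eu b, v ≠ 0 → ‖Φ.P (-T) b v‖ < (1/2) * ‖v‖)

/-- The action induced on the transversal bundle: `Ψ_t = ℙ ∘ dψ_t`. -/
def LinearCocycle.transAction (Φ : LinearCocycle B E)
    (Pr : B → E →L[ℝ] E) (t : ℝ) (θ : B) : E →L[ℝ] E :=
  (Pr (Φ.flow t θ)).comp (Φ.P t θ)

/-- The graph-transform relation: `M = T_t L`, i.e.
`dψ_t (v + L(v) X) = Ψ_t v + (T_t L)(Ψ_t v) • X` on `E^u`. -/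
def LinearCocycle.GraphTransformEq (Φ : LinearCocycle B E)
    (Pr : B → E →L[ℝ] E) (X : B → E) (Eu : B → Submodule ℝ E)
    (t : ℝ) (L M : B → E →L[ℝ] ℝ) : Prop :=
  ∀ θ : B, ∀ v ∈ Eu θ,
    Φ.P t θ (v + L θ v • X θ) =
      Φ.transAction Pr t θ v +
        M (Φ.flow t θ) (Φ.transAction Pr t θ v) • X (Φ.flow t θ)

set_option maxHeartbeats 2000000 in
/-- The graph transform associated with a hyperbolic splitting of the
transversal action: difference identity, contraction for large times, and the
invariant graph `𝓔^u = graph L*` with exponential backward decay. -/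
theorem graph_transform_invariant_unstable_bundle
    [CompactSpace B] [FiniteDimensional ℝ E]
    (Φ : LinearCocycle B E)
    (X : B → E) (hX : ∀ θ, X θ ≠ 0)
    (hXcont : Continuous X)
    (hXinv : ∀ t θ, Φ.P t θ (X θ) = X (Φ.flow t θ))
    (N : B → Submodule ℝ E)
    (hsplit : ∀ θ, IsCompl (N θ) (Submodule.span ℝ {X θ}))
    (Pr : B → E →L[ℝ] E)
    (hPrcont : Continuous Pr)
    (hPr : ∀ θ, ∀ v ∈ N θ, ∀ a : ℝ, Pr θ (v + a • X θ) = v)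
    (Es Eu : B → Submodule ℝ E)
    (hEsN : ∀ θ, Es θ ≤ N θ) (hEuN : ∀ θ, Eu θ ≤ N θ)
    (hEsInv : ∀ t θ, (Es θ).map (Φ.transAction Pr t θ : E →ₗ[ℝ] E)
      = Es (Φ.flow t θ))
    (hEuInv : ∀ t θ, (Eu θ).map (Φ.transAction Pr t θ : E →ₗ[ℝ] E)
      = Eu (Φ.flow t θ))
    (hCompl : ∀ θ, Es θ ⊔ Eu θ = N θ ∧ Es θ ⊓ Eu θ = ⊥)
    (C lam : ℝ) (hC : 0 < C) (hlam : 0 < lam)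
    (hEsContr : ∀ θ, ∀ v ∈ Es θ, ∀ t ≥ (0:ℝ),
      ‖Φ.transAction Pr t θ v‖ ≤ C * Real.exp (-lam * t) * ‖v‖)
    (hEuContr : ∀ θ, ∀ v ∈ Eu θ, ∀ t ≥ (0:ℝ),
      ‖Φ.transAction Pr (-t) θ v‖ ≤ C * Real.exp (-lam * t) * ‖v‖) :
    -- (i) the graph transform of a difference: T_t(L₁ - L₂) = (L₁-L₂)∘Ψ_t⁻¹
    (∀ t : ℝ, ∀ L₁ L₂ M₁ M₂ : B → E →L[ℝ] ℝ,
      Φ.GraphTransformEq Pr X Eu t L₁ M₁ →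
      Φ.GraphTransformEq Pr X Eu t L₂ M₂ →
      ∀ θ : B, ∀ v ∈ Eu θ,
        M₁ (Φ.flow t θ) (Φ.transAction Pr t θ v) -
            M₂ (Φ.flow t θ) (Φ.transAction Pr t θ v) =
          L₁ θ v - L₂ θ v) ∧
    -- (ii) contraction of the graph transform for large t
    (∃ t₀ > (0:ℝ), ∀ t ≥ t₀, ∃ c ∈ Set.Ico (0:ℝ) 1,
      ∀ L₁ L₂ M₁ M₂ : B → E →L[ℝ] ℝ,
        Φ.GraphTransformEq Pr X Eu t L₁ M₁ →
        Φ.GraphTransformEq Pr X Eu t L₂ M₂ →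
        BddAbove (Set.range fun θ => ‖L₁ θ - L₂ θ‖) →
        ∀ θ' : B, ∀ w ∈ Eu θ', ‖w‖ ≤ 1 →
          |M₁ θ' w - M₂ θ' w| ≤ c * ⨆ θ, ‖L₁ θ - L₂ θ‖) ∧
    -- (iii) a fixed point L* whose graph is dψ_t-invariant, with
    -- exponential backward decay on 𝓔^u = graph L*
    (∃ Lstar : B → E →L[ℝ] ℝ,
      (∀ t : ℝ, Φ.GraphTransformEq Pr X Eu t Lstar Lstar) ∧
      (∀ t : ℝ, ∀ θ : B,
        Φ.P t θ '' {ξ | ∃ v ∈ Eu θ, ξ = v + Lstar θ v • X θ} =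
          {ξ | ∃ w ∈ Eu (Φ.flow t θ), ξ = w + Lstar (Φ.flow t θ) w • X (Φ.flow t θ)}) ∧
      (∃ A > (0:ℝ), ∃ a > (0:ℝ), ∀ θ : B, ∀ v ∈ Eu θ, ∀ t ≥ (0:ℝ),
        ‖Φ.P (-t) θ (v + Lstar θ v • X θ)‖ ≤
          A * Real.exp (-a * t) * ‖v + Lstar θ v • X θ‖)) := by
    classical
  -- pointwise cocycle property
  have hPcomp : ∀ (s t : ℝ) (θ : B) (v : E),
      Φ.P s (Φ.flow t θ) (Φ.P t θ v) = Φ.P (s + t) θ v := by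
    intro s t θ v
    conv_rhs => rw [← Φ.P_comp s t θ]
    rfl
  have hΨdef : ∀ (t : ℝ) (θ : B) (v : E),
      Φ.transAction Pr t θ v = Pr (Φ.flow t θ) (Φ.P t θ v) := fun _ _ _ => rfl
  -- decomposition along X
  have hdecomp0 : ∀ (θ : B) (ξ : E), ∃ u ∈ N θ, ∃ a : ℝ, ξ = u + a • X θ := by
    intro θ ξ
    have hξ : ξ ∈ N θ ⊔ Submodule.span ℝ {X θ} := by
      rw [(hsplit θ).sup_eq_top]; exact Submodule.mem_top
    obtain ⟨u, hu, s, hs, huv⟩ := Submodule.mem_sup.1 hξ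
    obtain ⟨a, rfl⟩ := Submodule.mem_span_singleton.1 hs
    exact ⟨u, hu, a, huv.symm⟩
  have hPrN : ∀ (θ : B) (ξ : E), Pr θ ξ ∈ N θ := by
    intro θ ξ
    obtain ⟨u, hu, a, rfl⟩ := hdecomp0 θ ξ
    rw [hPr θ u hu a]; exact hu
  have hdecomp : ∀ (θ : B) (ξ : E), ∃ a : ℝ, ξ = Pr θ ξ + a • X θ := by
    intro θ ξ
    obtain ⟨u, hu, a, rfl⟩ := hdecomp0 θ ξ
    exact ⟨a, by rw [hPr θ u hu a]⟩
  choose κ hκ using hdecomp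
  have hXu : ∀ (θ : B) (a b : ℝ), a • X θ = b • X θ → a = b := by
    intro θ a b h
    have h' : (a - b) • X θ = 0 := by rw [sub_smul, h, sub_self]
    rcases smul_eq_zero.1 h' with h'' | h''
    · linarith [h'']
    · exact absurd h'' (hX θ)
  have hκsmulX : ∀ (θ : B) (ξ : E), κ θ ξ • X θ = ξ - Pr θ ξ := by
    intro θ ξ; rw [eq_sub_iff_add_eq, add_comm]; exact (hκ θ ξ).symm
  have hPrid : ∀ (θ : B), ∀ v ∈ N θ, Pr θ v = v := by
    intro θ v hv; simpa using hPr θ v hv 0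
  have hPrX : ∀ θ : B, Pr θ (X θ) = 0 := by
    intro θ; simpa using hPr θ 0 (Submodule.zero_mem _) 1
  have hκadd : ∀ (θ : B) (ξ η : E), κ θ (ξ + η) = κ θ ξ + κ θ η := by
    intro θ ξ η
    apply hXu θ
    rw [add_smul, hκsmulX, hκsmulX, hκsmulX, map_add]
    abel
  have hκsmul : ∀ (θ : B) (b : ℝ) (ξ : E), κ θ (b • ξ) = b * κ θ ξ := by
    intro θ b ξ
    apply hXu θ
    rw [mul_smul, hκsmulX, hκsmulX, map_smul, smul_sub]
  have hκdrop : ∀ (θ : B) (ξ : E) (a : ℝ), κ θ (ξ + a • X θ) = κ θ ξ + a := by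
    intro θ ξ a
    have hXa : κ θ (a • X θ) = a := by
      apply hXu θ
      rw [hκsmulX, map_smul, hPrX, smul_zero, sub_zero]
    rw [hκadd, hXa]
  have hκN : ∀ (θ : B), ∀ v ∈ N θ, κ θ v = 0 := by
    intro θ v hv
    apply hXu θ _ 0
    rw [hκsmulX, hPrid θ v hv, sub_self, zero_smul]
  -- the X-coordinate cocycle c
  obtain ⟨c, hcdef⟩ : ∃ c : ℝ → B → E → ℝ,
      ∀ t θ v, c t θ v = κ (Φ.flow t θ) (Φ.P t θ v) := ⟨_, fun _ _ _ => rfl⟩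
  have hc : ∀ (t : ℝ) (θ : B) (v : E),
      Φ.P t θ v = Φ.transAction Pr t θ v + c t θ v • X (Φ.flow t θ) := by
    intro t θ v
    rw [hcdef, hΨdef]
    exact hκ _ _
  have hΨcoc : ∀ (s t : ℝ) (θ : B) (v : E),
      Φ.transAction Pr s (Φ.flow t θ) (Φ.transAction Pr t θ v)
        = Φ.transAction Pr (s + t) θ v := by
    intro s t θ v
    have h1 : Pr (Φ.flow t θ) (Φ.P t θ v)
        = Φ.P t θ v - c t θ v • X (Φ.flow t θ) := by
      rw [hcdef, eq_sub_iff_add_eq]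
      exact (hκ _ _).symm
    rw [hΨdef, hΨdef, hΨdef, h1, map_sub, map_smul, hPcomp, hXinv, Φ.flow_add,
      map_sub, map_smul, hPrX, smul_zero, sub_zero]
  have hccoc : ∀ (s t : ℝ) (θ : B) (v : E),
      c (s + t) θ v = c t θ v + c s (Φ.flow t θ) (Φ.transAction Pr t θ v) := by
    intro s t θ v
    have h2 : Φ.P (s + t) θ v
        = Φ.P s (Φ.flow t θ) (Φ.transAction Pr t θ v) + c t θ v • X (Φ.flow (s + t) θ) := by
      rw [← hPcomp s t θ v]
      conv_lhs => rw [hc t θ v]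
      rw [map_add, map_smul, hXinv, Φ.flow_add]
    rw [hcdef (s+t), h2, hκdrop, hcdef s, Φ.flow_add]
    exact add_comm _ _
  have hΨ0 : ∀ (θ : B), ∀ v ∈ N θ, Φ.transAction Pr 0 θ v = v := by
    intro θ v hv
    rw [hΨdef, Φ.P_zero, Φ.flow_zero]
    simpa using hPrid θ v hv
  have hΨEu : ∀ (t : ℝ) (θ : B), ∀ v ∈ Eu θ,
      Φ.transAction Pr t θ v ∈ Eu (Φ.flow t θ) := by
    intro t θ v hv
    rw [← hEuInv t θ]
    exact ⟨v, hv, rfl⟩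
  have hΨsurj : ∀ (t : ℝ) (θ : B), ∀ w ∈ Eu (Φ.flow t θ),
      ∃ v ∈ Eu θ, Φ.transAction Pr t θ v = w := by
    intro t θ w hw
    rw [← hEuInv t θ] at hw
    obtain ⟨v, hv, hvw⟩ := Submodule.mem_map.1 hw
    exact ⟨v, hv, hvw⟩
  have hΨinvEu : ∀ (t : ℝ) (θ : B), ∀ v ∈ Eu θ,
      Φ.transAction Pr (-t) (Φ.flow t θ) (Φ.transAction Pr t θ v) = v := by
    intro t θ v hv
    rw [hΨcoc, neg_add_cancel]
    exact hΨ0 θ v (hEuN θ hv)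
  -- compactness constants
  obtain ⟨m, hm0, hmX⟩ : ∃ m : ℝ, 0 < m ∧ ∀ θ, m ≤ ‖X θ‖ := by
    rcases isEmpty_or_nonempty B with hB | hB
    · exact ⟨1, one_pos, fun θ => (IsEmpty.false θ).elim⟩
    · obtain ⟨θ₀, -, hθ₀⟩ := isCompact_univ.exists_isMinOn Set.univ_nonempty
        hXcont.norm.continuousOn
      exact ⟨‖X θ₀‖, norm_pos_iff.2 (hX θ₀), fun θ => hθ₀ (Set.mem_univ θ)⟩
  obtain ⟨Mx, hMx0, hMx⟩ : ∃ Mx : ℝ, 0 ≤ Mx ∧ ∀ θ, ‖X θ‖ ≤ Mx := by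
    obtain ⟨C₀, hC₀⟩ := isCompact_univ.exists_bound_of_continuousOn hXcont.continuousOn
    exact ⟨max C₀ 0, le_max_right _ _,
      fun θ => (hC₀ θ (Set.mem_univ θ)).trans (le_max_left _ _)⟩
  obtain ⟨Mp, hMp0, hMp⟩ : ∃ Mp : ℝ, 0 ≤ Mp ∧ ∀ θ, ‖Pr θ‖ ≤ Mp := by
    obtain ⟨C₀, hC₀⟩ := isCompact_univ.exists_bound_of_continuousOn hPrcont.continuousOn
    exact ⟨max C₀ 0, le_max_right _ _,
      fun θ => (hC₀ θ (Set.mem_univ θ)).trans (le_max_left _ _)⟩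
  set R : ℝ := (1 + Mp) / m with hR
  have hR0 : 0 ≤ R := div_nonneg (by linarith) hm0.le
  have hκb : ∀ (θ : B) (ξ : E), |κ θ ξ| ≤ R * ‖ξ‖ := by
    intro θ ξ
    have h2 : |κ θ ξ| * ‖X θ‖ = ‖ξ - Pr θ ξ‖ := by
      rw [← hκsmulX, norm_smul, Real.norm_eq_abs]
    have h3 : ‖ξ - Pr θ ξ‖ ≤ (1 + Mp) * ‖ξ‖ := by
      have h4 := (Pr θ).le_opNorm ξ
      have h5 := hMp θ
      have := norm_sub_le ξ (Pr θ ξ)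
      nlinarith [norm_nonneg ξ]
    have h1 : |κ θ ξ| * m ≤ (1 + Mp) * ‖ξ‖ := by
      calc |κ θ ξ| * m ≤ |κ θ ξ| * ‖X θ‖ :=
            mul_le_mul_of_nonneg_left (hmX θ) (abs_nonneg _)
      _ = ‖ξ - Pr θ ξ‖ := h2
      _ ≤ (1 + Mp) * ‖ξ‖ := h3
    rw [hR, div_mul_eq_mul_div, le_div_iff₀ hm0]
    linarith
  have hcb : ∀ s : ℝ, ∃ K : ℝ, 0 ≤ K ∧ ∀ (θ : B) (ξ : E), |c s θ ξ| ≤ K * ‖ξ‖ := by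
    intro s
    have hcont : Continuous fun θ : B => Φ.P s θ :=
      Φ.P_cont.comp (Continuous.prodMk_right s)
    obtain ⟨C₀, hC₀⟩ := isCompact_univ.exists_bound_of_continuousOn hcont.continuousOn
    refine ⟨R * max C₀ 0, mul_nonneg hR0 (le_max_right _ _), ?_⟩
    intro θ ξ
    rw [hcdef]
    calc |κ (Φ.flow s θ) (Φ.P s θ ξ)| ≤ R * ‖Φ.P s θ ξ‖ := hκb _ _
    _ ≤ R * (max C₀ 0 * ‖ξ‖) := by
        have h1 : ‖Φ.P s θ ξ‖ ≤ max C₀ 0 * ‖ξ‖ :=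
          le_trans ((Φ.P s θ).le_opNorm ξ)
            (mul_le_mul_of_nonneg_right
              ((hC₀ θ (Set.mem_univ θ)).trans (le_max_left _ _)) (norm_nonneg ξ))
        exact mul_le_mul_of_nonneg_left h1 hR0
    _ = R * max C₀ 0 * ‖ξ‖ := by ring
  obtain ⟨K₁, hK₁0, hK₁⟩ := hcb (-1)
  set r : ℝ := Real.exp (-lam) with hrdef
  have hr0 : 0 < r := Real.exp_pos _
  have hr1 : r < 1 := by
    rw [hrdef]
    calc Real.exp (-lam) < Real.exp 0 := Real.exp_lt_exp.2 (by linarith)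
    _ = 1 := Real.exp_zero
  have hrn : ∀ n : ℕ, Real.exp (-lam * (n:ℝ)) = r ^ n := by
    intro n
    rw [hrdef, mul_comm, Real.exp_nat_mul]
  -- the limit functional ℓ
  obtain ⟨l, hldef⟩ : ∃ l : B → E → ℝ, ∀ θ v,
      l θ v = ∑' n : ℕ, c (-1) (Φ.flow (-(n:ℝ)) θ) (Φ.transAction Pr (-(n:ℝ)) θ v) :=
    ⟨_, fun _ _ => rfl⟩
  have hgb : ∀ (θ : B), ∀ v ∈ Eu θ, ∀ n : ℕ,
      |c (-1) (Φ.flow (-(n:ℝ)) θ) (Φ.transAction Pr (-(n:ℝ)) θ v)|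
        ≤ K₁ * C * ‖v‖ * r ^ n := by
    intro θ v hv n
    calc |c (-1) (Φ.flow (-(n:ℝ)) θ) (Φ.transAction Pr (-(n:ℝ)) θ v)|
        ≤ K₁ * ‖Φ.transAction Pr (-(n:ℝ)) θ v‖ := hK₁ _ _
    _ ≤ K₁ * (C * Real.exp (-lam * (n:ℝ)) * ‖v‖) :=
        mul_le_mul_of_nonneg_left (hEuContr θ v hv (n:ℝ) (Nat.cast_nonneg n)) hK₁0
    _ = K₁ * C * ‖v‖ * r ^ n := by rw [hrn n]; ring
  have hsum : ∀ (θ : B), ∀ v ∈ Eu θ,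
      Summable fun n : ℕ => c (-1) (Φ.flow (-(n:ℝ)) θ) (Φ.transAction Pr (-(n:ℝ)) θ v) := by
    intro θ v hv
    apply Summable.of_norm_bounded
      ((summable_geometric_of_lt_one hr0.le hr1).mul_left (K₁ * C * ‖v‖))
    intro n
    rw [Real.norm_eq_abs]
    exact hgb θ v hv n
  have hpartial : ∀ (θ : B), ∀ v ∈ N θ, ∀ n : ℕ,
      (∑ k ∈ Finset.range n, c (-1) (Φ.flow (-(k:ℝ)) θ) (Φ.transAction Pr (-(k:ℝ)) θ v))
        = c (-(n:ℝ)) θ v := by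
    intro θ v hv n
    induction n with
    | zero =>
      simp only [Finset.range_zero, Finset.sum_empty, Nat.cast_zero, neg_zero]
      rw [hcdef]
      rw [Φ.flow_zero, Φ.P_zero]
      simpa using (hκN θ v hv).symm
    | succ n ih =>
      rw [Finset.sum_range_succ, ih, ← hccoc (-1) (-(n:ℝ)) θ v]
      have harg : (-1 : ℝ) + -(n:ℝ) = -((n+1 : ℕ) : ℝ) := by push_cast; ring
      rw [harg]
  have htend : ∀ (θ : B), ∀ v ∈ Eu θ,
      Tendsto (fun n : ℕ => c (-(n:ℝ)) θ v) atTop (𝓝 (l θ v)) := by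
    intro θ v hv
    have h1 := (hsum θ v hv).hasSum.tendsto_sum_nat
    rw [← hldef θ v] at h1
    exact h1.congr (fun n => hpartial θ v (hEuN θ hv) n)
  have hshift : ∀ (t : ℝ) (θ : B), ∀ w ∈ Eu θ,
      Tendsto (fun n : ℕ => c (-(n:ℝ) - t) θ w) atTop (𝓝 (l θ w)) := by
    intro t θ w hw
    obtain ⟨Kt, hKt0, hKt⟩ := hcb (-t)
    have heq : ∀ n : ℕ, c (-(n:ℝ) - t) θ w
        = c (-(n:ℝ)) θ w + c (-t) (Φ.flow (-(n:ℝ)) θ) (Φ.transAction Pr (-(n:ℝ)) θ w) := by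
      intro n
      have harg : (-(n:ℝ) - t) = -t + -(n:ℝ) := by ring
      rw [harg, hccoc]
    have herr : Tendsto
        (fun n : ℕ => c (-t) (Φ.flow (-(n:ℝ)) θ) (Φ.transAction Pr (-(n:ℝ)) θ w))
        atTop (𝓝 0) := by
      have hb : ∀ n : ℕ,
          ‖c (-t) (Φ.flow (-(n:ℝ)) θ) (Φ.transAction Pr (-(n:ℝ)) θ w)‖
            ≤ Kt * C * ‖w‖ * r ^ n := by
        intro n
        rw [Real.norm_eq_abs]
        calc |c (-t) (Φ.flow (-(n:ℝ)) θ) (Φ.transAction Pr (-(n:ℝ)) θ w)|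
            ≤ Kt * ‖Φ.transAction Pr (-(n:ℝ)) θ w‖ := hKt _ _
        _ ≤ Kt * (C * Real.exp (-lam * (n:ℝ)) * ‖w‖) :=
            mul_le_mul_of_nonneg_left (hEuContr θ w hw (n:ℝ) (Nat.cast_nonneg n)) hKt0
        _ = Kt * C * ‖w‖ * r ^ n := by rw [hrn n]; ring
      have hg0 : Tendsto (fun n : ℕ => Kt * C * ‖w‖ * r ^ n) atTop (𝓝 0) := by
        simpa using
          (tendsto_pow_atTop_nhds_zero_of_lt_one hr0.le hr1).const_mul (Kt * C * ‖w‖)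
      exact squeeze_zero_norm hb hg0
    have h2 := (htend θ w hw).add herr
    rw [add_zero] at h2
    exact h2.congr (fun n => (heq n).symm)
  have hfix : ∀ (t : ℝ) (θ : B), ∀ v ∈ Eu θ,
      l θ v = c t θ v + l (Φ.flow t θ) (Φ.transAction Pr t θ v) := by
    intro t θ v hv
    have hw := hΨEu t θ v hv
    have h1 : ∀ n : ℕ, c (-(n:ℝ)) θ v
        = c t θ v + c (-(n:ℝ) - t) (Φ.flow t θ) (Φ.transAction Pr t θ v) := by
      intro n
      have harg : (-(n:ℝ)) = (-(n:ℝ) - t) + t := by ring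
      conv_lhs => rw [harg]
      rw [hccoc]
    have h2 : Tendsto
        (fun n : ℕ => c t θ v + c (-(n:ℝ) - t) (Φ.flow t θ) (Φ.transAction Pr t θ v))
        atTop (𝓝 (c t θ v + l (Φ.flow t θ) (Φ.transAction Pr t θ v))) :=
      tendsto_const_nhds.add (hshift t (Φ.flow t θ) _ hw)
    exact tendsto_nhds_unique (htend θ v hv) (h2.congr (fun n => (h1 n).symm))
  have hcadd : ∀ (t : ℝ) (θ : B) (u v : E), c t θ (u + v) = c t θ u + c t θ v := by
    intro t θ u v
    rw [hcdef, hcdef, hcdef, map_add, hκadd]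
  have hcsmul : ∀ (t : ℝ) (θ : B) (b : ℝ) (v : E), c t θ (b • v) = b * c t θ v := by
    intro t θ b v
    rw [hcdef, hcdef, map_smul, hκsmul]
  have hladd : ∀ (θ : B), ∀ u ∈ Eu θ, ∀ v ∈ Eu θ, l θ (u + v) = l θ u + l θ v := by
    intro θ u hu v hv
    have h1 := (htend θ u hu).add (htend θ v hv)
    have h2 := htend θ (u + v) (Submodule.add_mem _ hu hv)
    refine tendsto_nhds_unique h2 (h1.congr fun n => ?_)
    exact (hcadd _ θ u v).symm
  have hlsmul : ∀ (θ : B) (b : ℝ), ∀ v ∈ Eu θ, l θ (b • v) = b * l θ v := by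
    intro θ b v hv
    have h1 := (htend θ v hv).const_mul b
    have h2 := htend θ (b • v) (Submodule.smul_mem _ b hv)
    refine tendsto_nhds_unique h2 (h1.congr fun n => ?_)
    exact (hcsmul _ θ b v).symm
  set D2 : ℝ := K₁ * C * (1 - r)⁻¹ with hD2def
  have hD20 : 0 ≤ D2 :=
    mul_nonneg (mul_nonneg hK₁0 hC.le) (inv_nonneg.2 (by linarith))
  have hlb : ∀ (θ : B), ∀ v ∈ Eu θ, |l θ v| ≤ D2 * ‖v‖ := by
    intro θ v hv
    rw [hldef]
    have hsum2 := (summable_geometric_of_lt_one hr0.le hr1).mul_left (K₁ * C * ‖v‖)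
    have hs1 : Summable fun n : ℕ =>
        ‖c (-1) (Φ.flow (-(n:ℝ)) θ) (Φ.transAction Pr (-(n:ℝ)) θ v)‖ := by
      apply Summable.of_nonneg_of_le (fun n => norm_nonneg _) (fun n => ?_) hsum2
      rw [Real.norm_eq_abs]
      exact hgb θ v hv n
    calc |∑' n : ℕ, c (-1) (Φ.flow (-(n:ℝ)) θ) (Φ.transAction Pr (-(n:ℝ)) θ v)|
        = ‖∑' n : ℕ, c (-1) (Φ.flow (-(n:ℝ)) θ) (Φ.transAction Pr (-(n:ℝ)) θ v)‖ :=
          (Real.norm_eq_abs _).symm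
    _ ≤ ∑' n : ℕ, ‖c (-1) (Φ.flow (-(n:ℝ)) θ) (Φ.transAction Pr (-(n:ℝ)) θ v)‖ :=
          norm_tsum_le_tsum_norm hs1
    _ ≤ ∑' n : ℕ, K₁ * C * ‖v‖ * r ^ n := by
          refine Summable.tsum_le_tsum (fun n => ?_) hs1 hsum2
          rw [Real.norm_eq_abs]
          exact hgb θ v hv n
    _ = K₁ * C * ‖v‖ * (1 - r)⁻¹ := by
          rw [tsum_mul_left, tsum_geometric_of_lt_one hr0.le hr1]
    _ = D2 * ‖v‖ := by rw [hD2def]; ring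
  -- build Lstar
  have hproj : ∀ θ : B, ∃ p : E →ₗ[ℝ] E, (∀ ξ, p ξ ∈ Eu θ) ∧ ∀ v ∈ Eu θ, p v = v := by
    intro θ
    obtain ⟨q, hq⟩ := Submodule.exists_isCompl (Eu θ)
    refine ⟨(Eu θ).subtype.comp (Submodule.projectionOnto (Eu θ) q hq),
      fun ξ => ?_, fun v hv => ?_⟩
    · exact ((Submodule.projectionOnto (Eu θ) q hq) ξ).2
    · show ((Submodule.projectionOnto (Eu θ) q hq) v : E) = v
      rw [show v = ((⟨v, hv⟩ : Eu θ) : E) from rfl,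
        Submodule.projectionOnto_apply_left hq]
  choose pEu hpEu1 hpEu2 using hproj
  set Lstarlin : B → E →ₗ[ℝ] ℝ := fun θ =>
    { toFun := fun ξ => -l θ (pEu θ ξ)
      map_add' := by
        intro ξ η
        rw [map_add, hladd θ _ (hpEu1 θ ξ) _ (hpEu1 θ η)]
        ring
      map_smul' := by
        intro b ξ
        rw [map_smul, hlsmul θ b _ (hpEu1 θ ξ)]
        simp only [smul_eq_mul, RingHom.id_apply]
        ring } with hLstarlin
  set Lstar : B → E →L[ℝ] ℝ := fun θ => LinearMap.toContinuousLinearMap (Lstarlin θ)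
    with hLstar
  have hLs : ∀ (θ : B), ∀ v ∈ Eu θ, Lstar θ v = -l θ v := by
    intro θ v hv
    show -l θ (pEu θ v) = -l θ v
    rw [hpEu2 θ v hv]
  have hGT : ∀ t : ℝ, Φ.GraphTransformEq Pr X Eu t Lstar Lstar := by
    intro t θ v hv
    have hΨv := hΨEu t θ v hv
    rw [hLs θ v hv, hLs _ _ hΨv, map_add, map_smul, hXinv, hc t θ v,
      hfix t θ v hv]
    module
  -- part (i)
  have part1 : ∀ t : ℝ, ∀ L₁ L₂ M₁ M₂ : B → E →L[ℝ] ℝ,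
      Φ.GraphTransformEq Pr X Eu t L₁ M₁ →
      Φ.GraphTransformEq Pr X Eu t L₂ M₂ →
      ∀ θ : B, ∀ v ∈ Eu θ,
        M₁ (Φ.flow t θ) (Φ.transAction Pr t θ v) -
            M₂ (Φ.flow t θ) (Φ.transAction Pr t θ v) =
          L₁ θ v - L₂ θ v := by
    intro t L₁ L₂ M₁ M₂ h1 h2 θ v hv
    have e1 := h1 θ v hv
    have e2 := h2 θ v hv
    rw [map_add, map_smul, hXinv, hc t θ v, add_assoc] at e1 e2
    have e1'' := add_left_cancel e1
    have e2'' := add_left_cancel e2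
    rw [← add_smul] at e1'' e2''
    have e1' := hXu _ _ _ e1''
    have e2' := hXu _ _ _ e2''
    rw [← e1', ← e2']
    ring
  refine ⟨part1, ?_, ?_⟩
  -- part (ii)
  · refine ⟨max 1 (Real.log C / lam + 1), lt_of_lt_of_le one_pos (le_max_left _ _), ?_⟩
    intro t ht
    have ht0 : (0:ℝ) ≤ t := le_trans (le_trans zero_le_one (le_max_left _ _)) ht
    refine ⟨C * Real.exp (-lam * t), ⟨by positivity, ?_⟩, ?_⟩
    · have h1 : Real.log C / lam + 1 ≤ t := le_trans (le_max_right _ _) ht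
      have h2 : Real.log C < lam * t := by
        have h3 := mul_le_mul_of_nonneg_left h1 hlam.le
        rw [mul_add, mul_div_cancel₀ _ hlam.ne'] at h3
        nlinarith
      calc C * Real.exp (-lam * t) < C * Real.exp (-Real.log C) :=
            mul_lt_mul_of_pos_left (Real.exp_lt_exp.2 (by linarith)) hC
      _ = 1 := by rw [Real.exp_neg, Real.exp_log hC, mul_inv_cancel₀ hC.ne']
    · intro L₁ L₂ M₁ M₂ h1 h2 hbdd θ' w hw hw1
      have hθ : Φ.flow t (Φ.flow (-t) θ') = θ' := by
        rw [Φ.flow_add, add_neg_cancel, Φ.flow_zero]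
      obtain ⟨v, hv, hvw⟩ := hΨsurj t (Φ.flow (-t) θ') w (by rw [hθ]; exact hw)
      have hM := part1 t L₁ L₂ M₁ M₂ h1 h2 (Φ.flow (-t) θ') v hv
      rw [hθ, hvw] at hM
      have hv_eq : v = Φ.transAction Pr (-t) θ' w := by
        conv_lhs => rw [← hΨinvEu t (Φ.flow (-t) θ') v hv]
        rw [hθ, hvw]
      have hvn : ‖v‖ ≤ C * Real.exp (-lam * t) := by
        rw [hv_eq]
        calc ‖Φ.transAction Pr (-t) θ' w‖ ≤ C * Real.exp (-lam * t) * ‖w‖ :=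
              hEuContr θ' w hw t ht0
        _ ≤ C * Real.exp (-lam * t) * 1 := by
              apply mul_le_mul_of_nonneg_left hw1
              positivity
        _ = C * Real.exp (-lam * t) := mul_one _
      rw [hM]
      have hBne : Nonempty B := ⟨θ'⟩
      have hsuple : ‖L₁ (Φ.flow (-t) θ') - L₂ (Φ.flow (-t) θ')‖
          ≤ ⨆ θ, ‖L₁ θ - L₂ θ‖ := le_ciSup hbdd (Φ.flow (-t) θ')
      calc |L₁ (Φ.flow (-t) θ') v - L₂ (Φ.flow (-t) θ') v|
          = ‖(L₁ (Φ.flow (-t) θ') - L₂ (Φ.flow (-t) θ')) v‖ := by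
            rw [ContinuousLinearMap.sub_apply, Real.norm_eq_abs]
      _ ≤ ‖L₁ (Φ.flow (-t) θ') - L₂ (Φ.flow (-t) θ')‖ * ‖v‖ :=
            (L₁ (Φ.flow (-t) θ') - L₂ (Φ.flow (-t) θ')).le_opNorm v
      _ ≤ (⨆ θ, ‖L₁ θ - L₂ θ‖) * (C * Real.exp (-lam * t)) :=
            mul_le_mul hsuple hvn (norm_nonneg v)
              (le_trans (norm_nonneg _) hsuple)
      _ = C * Real.exp (-lam * t) * ⨆ θ, ‖L₁ θ - L₂ θ‖ := mul_comm _ _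
  -- part (iii)
  · refine ⟨Lstar, hGT, ?_, ?_⟩
    · intro t θ
      ext ξ
      simp only [Set.mem_image, Set.mem_setOf_eq]
      constructor
      · rintro ⟨η, ⟨v, hv, rfl⟩, rfl⟩
        exact ⟨Φ.transAction Pr t θ v, hΨEu t θ v hv, hGT t θ v hv⟩
      · rintro ⟨w, hw, rfl⟩
        obtain ⟨v, hv, rfl⟩ := hΨsurj t θ w hw
        exact ⟨v + Lstar θ v • X θ, ⟨v, hv, rfl⟩, hGT t θ v hv⟩
    · refine ⟨(1 + D2 * Mx) * C * (Mp + 1), ?_, lam, hlam, ?_⟩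
      · have h1 : (0:ℝ) < 1 + D2 * Mx := by
          have := mul_nonneg hD20 hMx0; linarith
        exact mul_pos (mul_pos h1 hC) (by linarith)
      · intro θ v hv t ht
        have hw : Φ.transAction Pr (-t) θ v ∈ Eu (Φ.flow (-t) θ) := hΨEu (-t) θ v hv
        have hGTt := hGT (-t) θ v hv
        rw [hGTt]
        have hLw : |Lstar (Φ.flow (-t) θ) (Φ.transAction Pr (-t) θ v)|
            ≤ D2 * ‖Φ.transAction Pr (-t) θ v‖ := by
          rw [hLs _ _ hw, abs_neg]
          exact hlb _ _ hw
        have hvnorm : ‖v‖ ≤ (Mp + 1) * ‖v + Lstar θ v • X θ‖ := by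
          have h1 : Pr θ (v + Lstar θ v • X θ) = v := hPr θ v (hEuN θ hv) _
          calc ‖v‖ = ‖Pr θ (v + Lstar θ v • X θ)‖ := by rw [h1]
          _ ≤ ‖Pr θ‖ * ‖v + Lstar θ v • X θ‖ := (Pr θ).le_opNorm _
          _ ≤ (Mp + 1) * ‖v + Lstar θ v • X θ‖ := by
              have := hMp θ
              nlinarith [norm_nonneg (v + Lstar θ v • X θ)]
        have hcontr := hEuContr θ v hv t ht
        have hexp0 : (0:ℝ) < Real.exp (-lam * t) := Real.exp_pos _
        calc ‖Φ.transAction Pr (-t) θ v +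
              Lstar (Φ.flow (-t) θ) (Φ.transAction Pr (-t) θ v) • X (Φ.flow (-t) θ)‖
            ≤ ‖Φ.transAction Pr (-t) θ v‖ +
              |Lstar (Φ.flow (-t) θ) (Φ.transAction Pr (-t) θ v)| * ‖X (Φ.flow (-t) θ)‖ := by
              refine (norm_add_le _ _).trans ?_
              rw [norm_smul, Real.norm_eq_abs]
        _ ≤ ‖Φ.transAction Pr (-t) θ v‖ + (D2 * ‖Φ.transAction Pr (-t) θ v‖) * Mx := by
              have h2 := hMx (Φ.flow (-t) θ)
              have h3 := abs_nonneg (Lstar (Φ.flow (-t) θ) (Φ.transAction Pr (-t) θ v))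
              have h4 := norm_nonneg (Φ.transAction Pr (-t) θ v)
              nlinarith [norm_nonneg (X (Φ.flow (-t) θ))]
        _ = (1 + D2 * Mx) * ‖Φ.transAction Pr (-t) θ v‖ := by ring
        _ ≤ (1 + D2 * Mx) * (C * Real.exp (-lam * t) * ‖v‖) := by
              have hDx : (0:ℝ) ≤ D2 * Mx := mul_nonneg hD20 hMx0
              exact mul_le_mul_of_nonneg_left hcontr (by linarith)
        _ ≤ (1 + D2 * Mx) * (C * Real.exp (-lam * t) * ((Mp + 1) * ‖v + Lstar θ v • X θ‖)) := by
              have hDx : (0:ℝ) ≤ D2 * Mx := mul_nonneg hD20 hMx0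
              have h6 := mul_le_mul_of_nonneg_left hvnorm
                (mul_nonneg (by linarith : (0:ℝ) ≤ 1 + D2 * Mx)
                  (by positivity : (0:ℝ) ≤ C * Real.exp (-lam * t)))
              calc (1 + D2 * Mx) * (C * Real.exp (-lam * t) * ‖v‖)
                  = (1 + D2 * Mx) * (C * Real.exp (-lam * t)) * ‖v‖ := by ring
              _ ≤ (1 + D2 * Mx) * (C * Real.exp (-lam * t)) * ((Mp + 1) * ‖v + Lstar θ v • X θ‖) := h6
              _ = (1 + D2 * Mx) * (C * Real.exp (-lam * t) * ((Mp + 1) * ‖v + Lstar θ v • X θ‖)) := by ring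
        _ = (1 + D2 * Mx) * C * (Mp + 1) * Real.exp (-lam * t) * ‖v + Lstar θ v • X θ‖ := by
              ring
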